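/- Let 0 ≤ ε < 1 and let {Λ_i} be an ε-nearly Parseval g-frame for an n-dimensional Hilbert space H, with g-frame operator S. Then the canonical dual {Λ_i S^{-1}} satisfies ∑_i ‖Λ_i − Λ_i S^{-1}‖_F² ≤ n ε²/(1−ε). In particular, there exists a dual g-frame {Γ_i} of {Λ_i} with ∑_i ‖Λ_i − Γ_i‖_F² ≤ n ε²/(1−ε). -/

import Mathlib

/-- The Hilbert–Schmidt norm squared `‖T‖_F²` of an operator on a finite-dimensional
Hilbert space. -/
noncomputable def hsNormSq {H K : Type*} [NormedAddCommGroup H] [InnerProductSpace ℂ H]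
    [FiniteDimensional ℂ H] [NormedAddCommGroup K] [InnerProductSpace ℂ K]
    (T : H →L[ℂ] K) : ℝ :=
  ∑ k, ‖T (stdOrthonormalBasis ℂ H k)‖ ^ 2

open scoped InnerProductSpace ComplexConjugate

/-- For an ε-nearly Parseval g-frame `{Λ i}` on an `n`-dimensional Hilbert space with
frame operator `S`, the canonical dual `{Λ i S⁻¹}` satisfies
`∑ i ‖Λ i − Λ i S⁻¹‖_F² ≤ n ε²/(1−ε)`; in particular there is an alternate dual
`{Γ i}` with `∑ i ‖Λ i − Γ i‖_F² ≤ n ε²/(1−ε)`. -/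
theorem nearly_parseval_gframe_dual_dist_le
    {H K : Type*} [NormedAddCommGroup H] [InnerProductSpace ℂ H] [FiniteDimensional ℂ H]
    [NormedAddCommGroup K] [InnerProductSpace ℂ K] [CompleteSpace K]
    {I : Type*} (Λ : I → (H →L[ℂ] K)) (S Sinv : H →L[ℂ] H)
    (ε : ℝ) (hε0 : 0 ≤ ε) (hε1 : ε < 1)
    (hsum : ∀ x : H, Summable fun i => ‖Λ i x‖ ^ 2)
    (hlow : ∀ x : H, (1 - ε) * ‖x‖ ^ 2 ≤ ∑' i, ‖Λ i x‖ ^ 2)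
    (hup : ∀ x : H, ∑' i, ‖Λ i x‖ ^ 2 ≤ (1 + ε) * ‖x‖ ^ 2)
    (hS : ∀ x : H, HasSum (fun i => (Λ i).adjoint (Λ i x)) (S x))
    (hSinv₁ : ∀ x : H, S (Sinv x) = x) (hSinv₂ : ∀ x : H, Sinv (S x) = x) :
    (∑' i, hsNormSq (Λ i - (Λ i) ∘L Sinv)
        ≤ (Module.finrank ℂ H : ℝ) * ε ^ 2 / (1 - ε)) ∧
    ∃ Γ : I → (H →L[ℂ] K),
      (∀ x : H, HasSum (fun i => (Λ i).adjoint (Γ i x)) x) ∧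
      ∑' i, hsNormSq (Λ i - Γ i) ≤ (Module.finrank ℂ H : ℝ) * ε ^ 2 / (1 - ε) := by
  classical
  have hε1' : (0:ℝ) < 1 - ε := by linarith
  -- the inner product against `S` expands as a sum
  have hSsum : ∀ x y : H, HasSum (fun i => (⟪Λ i x, Λ i y⟫_ℂ)) ⟪x, S y⟫_ℂ := by
    intro x y
    have h1 := (hS y).mapL (innerSL ℂ x)
    simpa [ContinuousLinearMap.adjoint_inner_right] using h1
  have hq : ∀ x : H, ⟪x, S x⟫_ℂ = ((∑' i, ‖Λ i x‖ ^ 2 : ℝ) : ℂ) := by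
    intro x
    have h2 : HasSum (fun i => ((‖Λ i x‖ ^ 2 : ℝ) : ℂ)) ⟪x, S x⟫_ℂ := by
      have := hSsum x x
      simpa [inner_self_eq_norm_sq_to_K] using this
    have h3 : HasSum (fun i => ((‖Λ i x‖ ^ 2 : ℝ) : ℂ)) ((∑' i, ‖Λ i x‖ ^ 2 : ℝ) : ℂ) :=
      ((hsum x).hasSum).mapL Complex.ofRealCLM
    exact (h2.unique h3).symm ▸ rfl
  have hqre : ∀ x : H, (⟪x, S x⟫_ℂ).re = ∑' i, ‖Λ i x‖ ^ 2 := by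
    intro x; rw [hq]; exact Complex.ofReal_re _
  -- symmetry of S
  have hsym : ∀ u v : H, ⟪v, S u⟫_ℂ = conj ⟪u, S v⟫_ℂ := by
    intro u v
    have h1 : HasSum (fun i => conj (⟪Λ i u, Λ i v⟫_ℂ)) (conj ⟪u, S v⟫_ℂ) :=
      (hSsum u v).star
    have h2 : HasSum (fun i => conj (⟪Λ i u, Λ i v⟫_ℂ)) ⟪v, S u⟫_ℂ := by
      simpa [inner_conj_symm] using hSsum v u
    exact h2.unique h1
  have hsymre : ∀ u v : H, (⟪v, S u⟫_ℂ).re = (⟪u, S v⟫_ℂ).re := by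
    intro u v; rw [hsym u v]; exact Complex.conj_re _
  -- the quadratic form of A = S - 1
  have hBdiag : ∀ u : H, |(⟪u, S u - u⟫_ℂ).re| ≤ ε * ‖u‖ ^ 2 := by
    intro u
    have h1 : (⟪u, S u - u⟫_ℂ).re = (∑' i, ‖Λ i u‖ ^ 2) - ‖u‖ ^ 2 := by
      rw [inner_sub_right, Complex.sub_re, hqre]
      have : ⟪u, u⟫_ℂ = ((‖u‖ ^ 2 : ℝ) : ℂ) := by
        rw [inner_self_eq_norm_sq_to_K]; norm_cast
      rw [this, Complex.ofReal_re]
    rw [h1, abs_le]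
    constructor
    · have := hlow u; nlinarith
    · have := hup u; nlinarith
  have hBsymm : ∀ u v : H, (⟪v, S u - u⟫_ℂ).re = (⟪u, S v - v⟫_ℂ).re := by
    intro u v
    rw [inner_sub_right, inner_sub_right, Complex.sub_re, Complex.sub_re, hsymre u v]
    have : (⟪v, u⟫_ℂ).re = (⟪u, v⟫_ℂ).re := by
      rw [← inner_conj_symm u v]; exact Complex.conj_re _
    rw [this]
  -- polarization bound
  have hpolar : ∀ u v : H, (⟪v, S u - u⟫_ℂ).re ≤ ε / 2 * (‖u‖ ^ 2 + ‖v‖ ^ 2) := by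
    intro u v
    have hexp : ∀ a b : H, (⟪a + b, S (a + b) - (a + b)⟫_ℂ).re
        = (⟪a, S a - a⟫_ℂ).re + (⟪b, S b - b⟫_ℂ).re
          + (⟪a, S b - b⟫_ℂ).re + (⟪b, S a - a⟫_ℂ).re := by
      intro a b
      have : S (a + b) - (a + b) = (S a - a) + (S b - b) := by
        rw [map_add]; abel
      rw [this, inner_add_left, inner_add_right, inner_add_right, Complex.add_re,
        Complex.add_re, Complex.add_re]
      ring
    have hexp2 : ∀ a b : H, (⟪a - b, S (a - b) - (a - b)⟫_ℂ).re
        = (⟪a, S a - a⟫_ℂ).re + (⟪b, S b - b⟫_ℂ).re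
          - (⟪a, S b - b⟫_ℂ).re - (⟪b, S a - a⟫_ℂ).re := by
      intro a b
      have h := hexp a (-b)
      have e1 : S (-b) - (-b) = -(S b - b) := by rw [map_neg]; abel
      rw [e1, inner_neg_neg, inner_neg_right, inner_neg_left, Complex.neg_re,
        Complex.neg_re, ← sub_eq_add_neg a b] at h
      linarith [h]
    have h4 : 4 * (⟪v, S u - u⟫_ℂ).re
        = (⟪u + v, S (u + v) - (u + v)⟫_ℂ).re - (⟪u - v, S (u - v) - (u - v)⟫_ℂ).re := by
      rw [hexp u v, hexp2 u v, hBsymm u v]; ring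
    have b1 := (abs_le.mp (hBdiag (u + v))).2
    have b2 := (abs_le.mp (hBdiag (u - v))).1
    have hpar := parallelogram_law_with_norm ℂ u v
    nlinarith [h4, b1, b2, hpar, pow_two_nonneg (‖u+v‖), sq ‖u+v‖, sq ‖u-v‖, sq ‖u‖,
      sq ‖v‖]
  -- norm bound ‖S u - u‖ ≤ ε ‖u‖
  have hA : ∀ u : H, ‖S u - u‖ ≤ ε * ‖u‖ := by
    intro u
    by_cases h0 : S u - u = 0
    · rw [h0, norm_zero]; positivity
    · have hAu : (0:ℝ) < ‖S u - u‖ := norm_pos_iff.mpr h0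
      set c : ℝ := ‖u‖ / ‖S u - u‖ with hc
      have hc0 : 0 ≤ c := by positivity
      set v : H := (c : ℂ) • (S u - u) with hv
      have hrev : (⟪v, S u - u⟫_ℂ).re = c * ‖S u - u‖ ^ 2 := by
        rw [hv, inner_smul_left]
        have : ⟪S u - u, S u - u⟫_ℂ = ((‖S u - u‖ ^ 2 : ℝ) : ℂ) := by
          rw [inner_self_eq_norm_sq_to_K]; norm_cast
        rw [this, Complex.conj_ofReal, ← Complex.ofReal_mul, Complex.ofReal_re]
      have hnv : ‖v‖ = ‖u‖ := by
        rw [hv, norm_smul]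
        simp only [Complex.norm_real, Real.norm_eq_abs, abs_of_nonneg hc0, hc]
        rw [abs_of_nonneg (by positivity)]; field_simp [hAu.ne']
      have hb := hpolar u v
      rw [hrev, hnv, hc] at hb
      have key : ‖u‖ * ‖S u - u‖ ≤ ε * ‖u‖ ^ 2 := by
        have : ‖u‖ / ‖S u - u‖ * ‖S u - u‖ ^ 2 = ‖u‖ * ‖S u - u‖ := by
          field_simp
        rw [this] at hb; linarith
      by_cases hu0 : u = 0
      · exfalso
        have : S u - u = 0 := by rw [hu0]; simp
        exact h0 this
      · have hu : (0:ℝ) < ‖u‖ := norm_pos_iff.mpr hu0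
        have := key
        nlinarith
  -- main per-vector bound
  have key : ∀ x : H, ∑' i, ‖Λ i (x - Sinv x)‖ ^ 2 ≤ ε ^ 2 / (1 - ε) * ‖x‖ ^ 2 := by
    intro x
    set w : H := x - Sinv x with hwdef
    set z : H := S x - x with hzdef
    have hSw : S w = z := by
      rw [hwdef, hzdef, map_sub, hSinv₁]
    have hz : ‖z‖ ≤ ε * ‖x‖ := hA x
    have hqw : ∑' i, ‖Λ i w‖ ^ 2 = (⟪w, z⟫_ℂ).re := by rw [← hSw, hqre]
    have hcs : (⟪w, z⟫_ℂ).re ≤ ‖w‖ * ‖z‖ := by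
      calc (⟪w, z⟫_ℂ).re ≤ ‖⟪w, z⟫_ℂ‖ := Complex.re_le_norm _
        _ ≤ ‖w‖ * ‖z‖ := norm_inner_le_norm w z
    have hlb : (1 - ε) * ‖w‖ ^ 2 ≤ ∑' i, ‖Λ i w‖ ^ 2 := hlow w
    by_cases hw0 : w = 0
    · have : ∑' i, ‖Λ i w‖ ^ 2 = 0 := by
        rw [hw0]; simp
      rw [this]; positivity
    · have hwpos : (0:ℝ) < ‖w‖ := norm_pos_iff.mpr hw0
      have h1 : (1 - ε) * ‖w‖ ^ 2 ≤ ‖w‖ * ‖z‖ := by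
        calc (1 - ε) * ‖w‖ ^ 2 ≤ ∑' i, ‖Λ i w‖ ^ 2 := hlb
          _ = (⟪w, z⟫_ℂ).re := hqw
          _ ≤ ‖w‖ * ‖z‖ := hcs
      have hwle : ‖w‖ ≤ ‖z‖ / (1 - ε) := by
        rw [le_div_iff₀ hε1']
        nlinarith
      have hz0 : 0 ≤ ‖z‖ := norm_nonneg _
      calc ∑' i, ‖Λ i w‖ ^ 2 = (⟪w, z⟫_ℂ).re := hqw
        _ ≤ ‖w‖ * ‖z‖ := hcs
        _ ≤ (‖z‖ / (1 - ε)) * ‖z‖ := by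
            apply mul_le_mul_of_nonneg_right hwle hz0
        _ = ‖z‖ ^ 2 / (1 - ε) := by ring
        _ ≤ (ε * ‖x‖) ^ 2 / (1 - ε) := by
            gcongr
        _ = ε ^ 2 / (1 - ε) * ‖x‖ ^ 2 := by ring
  -- assemble the Hilbert–Schmidt sum
  set e := stdOrthonormalBasis ℂ H with he
  have heq : ∀ i, hsNormSq (Λ i - (Λ i) ∘L Sinv)
      = ∑ k, ‖Λ i (e k - Sinv (e k))‖ ^ 2 := by
    intro i
    unfold hsNormSq
    refine Finset.sum_congr rfl fun k _ => ?_
    rw [ContinuousLinearMap.sub_apply, ContinuousLinearMap.comp_apply, ← map_sub]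
  have hsum' : ∀ k, Summable (fun i => ‖Λ i (e k - Sinv (e k))‖ ^ 2) := fun k =>
    hsum _
  have hmain : ∑' i, hsNormSq (Λ i - (Λ i) ∘L Sinv)
      ≤ (Module.finrank ℂ H : ℝ) * ε ^ 2 / (1 - ε) := by
    have hswap : ∑' i, hsNormSq (Λ i - (Λ i) ∘L Sinv)
        = ∑ k, ∑' i, ‖Λ i (e k - Sinv (e k))‖ ^ 2 := by
      calc ∑' i, hsNormSq (Λ i - (Λ i) ∘L Sinv)
          = ∑' i, ∑ k, ‖Λ i (e k - Sinv (e k))‖ ^ 2 := by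
            exact tsum_congr heq
        _ = ∑ k, ∑' i, ‖Λ i (e k - Sinv (e k))‖ ^ 2 :=
            Summable.tsum_finsetSum fun k _ => hsum' k
    rw [hswap]
    have hbd : ∀ k, ∑' i, ‖Λ i (e k - Sinv (e k))‖ ^ 2 ≤ ε ^ 2 / (1 - ε) := by
      intro k
      have := key (e k)
      have hek : ‖e k‖ = 1 := e.orthonormal.1 k
      rw [hek] at this
      simpa using this
    calc ∑ k, ∑' i, ‖Λ i (e k - Sinv (e k))‖ ^ 2
        ≤ ∑ _k : Fin (Module.finrank ℂ H), (ε ^ 2 / (1 - ε)) :=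
          Finset.sum_le_sum fun k _ => hbd k
      _ = (Module.finrank ℂ H : ℝ) * ε ^ 2 / (1 - ε) := by
          rw [Finset.sum_const, Finset.card_univ, Fintype.card_fin, nsmul_eq_mul]
          ring
  refine ⟨hmain, fun i => Λ i ∘L Sinv, ?_, hmain⟩
  intro x
  have h := hS (Sinv x)
  rw [hSinv₁ x] at h
  simpa using h
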